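/- Let a be a weak composition of length n with N=a_1+⋯+a_n, let m≥1, and let 0^m×a denote the weak composition (0,…,0,a_1,…,a_n) of length n+m. The shift map σ sending a standard filling T of D(a) to the standard filling T' of D(0^m×a) defined by T'(i+m,j)=T(i,j) restricts to a bijection SKD(a) → SKD(0^m×a) satisfying maj(T')=maj(T); moreover, if T∈SKD(a) is non-virtual, then T' is non-virtual and des(T')=0^m×des(T) (the weak composition des(T) preceded by m zero parts). -/

import Mathlib

open scoped Classical
open Finset

namespace NSMac

noncomputable section

/-- `NN n a` is the total size `a 1 + ⋯ + a n` of the weak composition `a` of length `n`. -/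
def NN (n : ℕ) (a : ℕ → ℕ) : ℕ := ∑ i ∈ Finset.Icc 1 n, a i

/-- The key diagram of a weak composition `a` of length `n`: cells `(i, j)` (row `i`,
column `j`, both 1-based, rows indexed bottom to top) with `1 ≤ i ≤ n`, `1 ≤ j ≤ a i`. -/
def keyDiagram (n : ℕ) (a : ℕ → ℕ) : Finset (ℕ × ℕ) :=
  (Finset.Icc 1 n ×ˢ Finset.Icc 1 (NN n a)).filter (fun c => c.2 ≤ a c.1)

/-- A standard filling: a bijection from the diagram onto `{1, …, N}`. -/
def IsStandardFilling (n : ℕ) (a : ℕ → ℕ) (T : ℕ × ℕ → ℕ) : Prop :=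
  Set.BijOn T (keyDiagram n a : Set (ℕ × ℕ)) (Set.Icc 1 (NN n a))

/-- Key tableau: positive entries, distinct within each column, rows weakly decreasing
left to right, and the key condition on column pairs. -/
def IsKeyTableau (n : ℕ) (a : ℕ → ℕ) (T : ℕ × ℕ → ℕ) : Prop :=
  (∀ c ∈ keyDiagram n a, 1 ≤ T c) ∧
  (∀ c ∈ keyDiagram n a, ∀ d ∈ keyDiagram n a, c.2 = d.2 → c ≠ d → T c ≠ T d) ∧
  (∀ r c : ℕ, (r, c) ∈ keyDiagram n a → (r, c + 1) ∈ keyDiagram n a →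
    T (r, c + 1) ≤ T (r, c)) ∧
  (∀ r r' c : ℕ, (r, c) ∈ keyDiagram n a → (r', c) ∈ keyDiagram n a → r' < r →
    T (r, c) < T (r', c) →
    (r', c + 1) ∈ keyDiagram n a ∧ T (r, c) < T (r', c + 1))

/-- Every entry is at most its row index. -/
def RowBounded (n : ℕ) (a : ℕ → ℕ) (T : ℕ × ℕ → ℕ) : Prop :=
  ∀ c ∈ keyDiagram n a, T c ≤ c.1

/-- The finset of fillings of the key diagram with entries in `{1, …, B}`, encoded as
finitely supported functions vanishing off the diagram. -/
def Fillings (n : ℕ) (a : ℕ → ℕ) (B : ℕ) : Finset ((ℕ × ℕ) →₀ ℕ) :=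
  (keyDiagram n a).finsupp (fun _ => Finset.Icc 1 B)

/-- Standard key tableaux `SKT(a)`. -/
def SKTset (n : ℕ) (a : ℕ → ℕ) : Finset ((ℕ × ℕ) →₀ ℕ) :=
  (Fillings n a (NN n a)).filter fun T => IsStandardFilling n a ⇑T ∧ IsKeyTableau n a ⇑T

/-- Semistandard key tableaux `SSKT(a)`. -/
def SSKTset (n : ℕ) (a : ℕ → ℕ) : Finset ((ℕ × ℕ) →₀ ℕ) :=
  (Fillings n a n).filter fun T => IsKeyTableau n a ⇑T ∧ RowBounded n a ⇑T

/-- The leg of a cell of a key diagram. -/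
def leg (a : ℕ → ℕ) (c : ℕ × ℕ) : ℕ := a c.1 + 1 - c.2

/-- `maj`: the sum of legs of cells whose entry strictly exceeds the entry to its left. -/
def maj (n : ℕ) (a : ℕ → ℕ) (T : ℕ × ℕ → ℕ) : ℕ :=
  ∑ c ∈ (keyDiagram n a).filter (fun c => 2 ≤ c.2 ∧ T (c.1, c.2 - 1) < T c), leg a c

/-- Counterclockwise cyclic orientation of a triple of entries. -/
def cyc3 (u v w : ℕ) : Prop := (u < v ∧ v < w) ∨ (v < w ∧ w < u) ∨ (w < u ∧ u < v)

/-- A Type I co-inversion triple, encoded by the pair of cells `p.1 = (r, c)` and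
`p.2 = (r', c)` with `r < r'`, `a r' < a r`; the third cell is `(r, c+1)`. -/
def IsCoinvI (n : ℕ) (a : ℕ → ℕ) (T : ℕ × ℕ → ℕ) (p : (ℕ × ℕ) × (ℕ × ℕ)) : Prop :=
  p.1.2 = p.2.2 ∧ p.1.1 < p.2.1 ∧ a p.2.1 < a p.1.1 ∧
  (p.1.1, p.1.2 + 1) ∈ keyDiagram n a ∧
  cyc3 (T p.2) (T p.1) (T (p.1.1, p.1.2 + 1))

/-- A Type II co-inversion triple, encoded by the pair of cells `p.1 = (r, c)` and
`p.2 = (r'', c+1)` with `r'' < r`, `a r'' ≤ a r`; the third cell is `(r, c+1)`. -/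
def IsCoinvII (n : ℕ) (a : ℕ → ℕ) (T : ℕ × ℕ → ℕ) (p : (ℕ × ℕ) × (ℕ × ℕ)) : Prop :=
  p.2.2 = p.1.2 + 1 ∧ p.2.1 < p.1.1 ∧ a p.2.1 ≤ a p.1.1 ∧
  (p.1.1, p.1.2 + 1) ∈ keyDiagram n a ∧
  cyc3 (T p.1) (T (p.1.1, p.1.2 + 1)) (T p.2)

/-- `coinv`: the number of co-inversion triples. -/
def coinv (n : ℕ) (a : ℕ → ℕ) (T : ℕ × ℕ → ℕ) : ℕ :=
  (((keyDiagram n a) ×ˢ (keyDiagram n a)).filter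
    (fun p => IsCoinvI n a T p ∨ IsCoinvII n a T p)).card

/-- Two cells attack each other: same column, or adjacent columns with the left cell
strictly higher. -/
def Attacks (c d : ℕ × ℕ) : Prop :=
  (c.2 = d.2 ∧ c ≠ d) ∨ (d.2 = c.2 + 1 ∧ d.1 < c.1) ∨ (c.2 = d.2 + 1 ∧ c.1 < d.1)

/-- Non-attacking filling: attacking cells get distinct entries and first-column entries
are at most their row index. -/
def IsNonAttacking (n : ℕ) (a : ℕ → ℕ) (T : ℕ × ℕ → ℕ) : Prop :=
  (∀ c ∈ keyDiagram n a, ∀ d ∈ keyDiagram n a, Attacks c d → T c ≠ T d) ∧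
  (∀ r : ℕ, (r, 1) ∈ keyDiagram n a → T (r, 1) ≤ r)

/-- Semistandard key tabloids `SSKD(a)`. -/
def SSKDset (n : ℕ) (a : ℕ → ℕ) : Finset ((ℕ × ℕ) →₀ ℕ) :=
  (Fillings n a n).filter fun T => IsNonAttacking n a ⇑T ∧ coinv n a ⇑T = 0

/-- Standard key tabloids `SKD(a)`. -/
def SKDset (n : ℕ) (a : ℕ → ℕ) : Finset ((ℕ × ℕ) →₀ ℕ) :=
  (Fillings n a (NN n a)).filter fun T => IsStandardFilling n a ⇑T ∧ coinv n a ⇑T = 0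

/-- The weight of a filling, as a finitely supported exponent vector. -/
def wtF (n : ℕ) (a : ℕ → ℕ) (T : ℕ × ℕ → ℕ) : ℕ →₀ ℕ :=
  ∑ c ∈ keyDiagram n a, Finsupp.single (T c) 1

/-- The row of the cell containing entry `i` (of a standard filling). -/
def rowOf (n : ℕ) (a : ℕ → ℕ) (T : ℕ × ℕ → ℕ) (i : ℕ) : ℕ :=
  ((keyDiagram n a).filter (fun c => T c = i)).sup (fun c => c.1)

/-- The column of the cell containing entry `i` (of a standard filling). -/
def colOf (n : ℕ) (a : ℕ → ℕ) (T : ℕ × ℕ → ℕ) (i : ℕ) : ℕ :=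
  ((keyDiagram n a).filter (fun c => T c = i)).sup (fun c => c.2)

/-- `tvalAux n a T m` is the `t`-value of the block (for the weak descent composition)
containing the entry `N - m`, computed by downward recursion from entry `N`. -/
def tvalAux (n : ℕ) (a : ℕ → ℕ) (T : ℕ × ℕ → ℕ) : ℕ → ℤ
  | 0 => if colOf n a T (NN n a) = 1 then (rowOf n a T (NN n a) : ℤ) else (n : ℤ)
  | m + 1 =>
    let i := NN n a - (m + 1)
    let prev := tvalAux n a T m
    if colOf n a T i ≤ colOf n a T (i + 1) then
      if colOf n a T i = 1 then min (rowOf n a T i : ℤ) (prev - 1) else prev - 1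
    else prev

/-- The `t`-value assigned to entry `i` of a standard filling. -/
def tval (n : ℕ) (a : ℕ → ℕ) (T : ℕ × ℕ → ℕ) (i : ℕ) : ℤ := tvalAux n a T (NN n a - i)

/-- The weak descent composition of a standard filling: `none` when the filling is
virtual, otherwise the weak composition of length `n` recording block sizes at rows. -/
def desOpt (n : ℕ) (a : ℕ → ℕ) (T : ℕ × ℕ → ℕ) : Option (ℕ → ℕ) :=
  if ∀ i ∈ Finset.Icc 1 (NN n a), 1 ≤ tval n a T i then
    some (fun r => ((Finset.Icc 1 (NN n a)).filter (fun i => tval n a T i = (r : ℤ))).card)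
  else none

/-- `flat n a`: the strong composition obtained from `(a 1, …, a n)` by deleting zeros. -/
def flat (n : ℕ) (a : ℕ → ℕ) : List ℕ :=
  ((List.range n).map (fun i => a (i + 1))).filter (fun x => x ≠ 0)

/-- `Refines β α`: `β` is obtained by splitting the parts of `α` into consecutive
(nonempty) chunks. -/
def Refines (β α : List ℕ) : Prop :=
  ∃ L : List (List ℕ), L.flatten = β ∧ L.map List.sum = α ∧ [] ∉ L

/-- `Dominates n b a`: `b ≥ a` in prefix-sum order, i.e. `b₁ + ⋯ + b_k ≥ a₁ + ⋯ + a_k`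
for all `k = 1, …, n`. -/
def Dominates (n : ℕ) (b a : ℕ → ℕ) : Prop :=
  ∀ k, 1 ≤ k → k ≤ n → ∑ i ∈ Finset.Icc 1 k, a i ≤ ∑ i ∈ Finset.Icc 1 k, b i

/-- The fundamental slide polynomial `𝔉_a(x₁, …, x_n)`, with coefficients in `ℤ[q]`. -/
def Slide (n : ℕ) (a : ℕ → ℕ) : MvPolynomial ℕ (Polynomial ℤ) :=
  ∑ b ∈ ((Finset.Icc 1 n).finsuppAntidiag (NN n a)).filter
      (fun b : ℕ →₀ ℕ => Dominates n ⇑b a ∧ Refines (flat n ⇑b) (flat n a)),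
    MvPolynomial.monomial b 1

/-- `𝔉` extended by `𝔉_∅ = 0`. -/
def SlideOpt (n : ℕ) : Option (ℕ → ℕ) → MvPolynomial ℕ (Polynomial ℤ)
  | none => 0
  | some b => Slide n b

/-- The key polynomial (type A Demazure character) `κ_a = Σ_{T ∈ SKT(a)} 𝔉_{des T}`. -/
def kappa (n : ℕ) (a : ℕ → ℕ) : MvPolynomial ℕ (Polynomial ℤ) :=
  ∑ T ∈ SKTset n a, SlideOpt n (desOpt n a ⇑T)

/-- The specialized nonsymmetric Macdonald polynomial
`E_a(X; q, 0) = Σ_{T ∈ SSKD(a)} q^{maj T} x^{wt T}` in `ℤ[q][x]`. -/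
def Epoly (n : ℕ) (a : ℕ → ℕ) : MvPolynomial ℕ (Polynomial ℤ) :=
  ∑ T ∈ SSKDset n a, MvPolynomial.monomial (wtF n a ⇑T) (Polynomial.X ^ maj n a ⇑T)

/-- Standardization: the new label of cell `c` is the number of cells `d` whose entry is
smaller, or equal with `d` weakly to the right (so equal entries are relabeled right to
left, processing entry values in increasing order). -/
def stdize (n : ℕ) (a : ℕ → ℕ) (T : ℕ × ℕ → ℕ) : ℕ × ℕ → ℕ := fun c =>
  ((keyDiagram n a).filter (fun d => T d < T c ∨ (T d = T c ∧ c.2 ≤ d.2))).card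

/-- Standardization, packaged as a finitely supported filling. -/
def stdF (n : ℕ) (a : ℕ → ℕ) (T : ℕ × ℕ → ℕ) : (ℕ × ℕ) →₀ ℕ :=
  ∑ c ∈ keyDiagram n a, Finsupp.single c (stdize n a T c)

/-- Column reading order: columns left to right, each column bottom to top. -/
def colLt (c d : ℕ × ℕ) : Prop := c.2 < d.2 ∨ (c.2 = d.2 ∧ c.1 < d.1)

/-- The cell of a standard filling containing entry `i`. -/
def cellOf (n : ℕ) (a : ℕ → ℕ) (T : ℕ × ℕ → ℕ) (i : ℕ) : ℕ × ℕ :=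
  (rowOf n a T i, colOf n a T i)

/-- Exchange the values `u` and `v`. -/
def swapVals (u v : ℕ) : ℕ → ℕ := fun m => if m = u then v else if m = v then u else m

/-- The cyclic relabeling `i-1 ↦ i ↦ i+1 ↦ i-1` of values. -/
def rho1 (i : ℕ) : ℕ → ℕ := fun m =>
  if m = i - 1 then i else if m = i then i + 1 else if m = i + 1 then i - 1 else m

/-- The cyclic relabeling `i-1 ↦ i+1 ↦ i ↦ i-1` of values. -/
def rho2 (i : ℕ) : ℕ → ℕ := fun m =>
  if m = i - 1 then i + 1 else if m = i then i - 1 else if m = i + 1 then i else m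

/-- The weak dual equivalence involution `ψ_i` on standard fillings. Letting `b, c, d` be
the cells of `i-1, i, i+1` in column reading order: `ψ_i(T) = T` if `c` contains `i`;
else `𝔟_i(T)` if `b, d` are attacking or row-adjacent (the nontrivial cycling of
`i-1, i, i+1` for which `c` does not receive `i`); else exchange `i-1, i` if `c`
contains `i+1`, and exchange `i, i+1` if `c` contains `i-1`. -/
def psi (n : ℕ) (a : ℕ → ℕ) (i : ℕ) (T : ℕ × ℕ → ℕ) : ℕ × ℕ → ℕ :=
  let x := cellOf n a T (i - 1)
  let y := cellOf n a T i
  let z := cellOf n a T (i + 1)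
  if (colLt x y ∧ colLt y z) ∨ (colLt z y ∧ colLt y x) then T
  else
    let xIsMid : Prop := (colLt y x ∧ colLt x z) ∨ (colLt z x ∧ colLt x y)
    let other : ℕ × ℕ := if xIsMid then z else x
    if Attacks y other ∨ (y.1 = other.1 ∧ (y.2 = other.2 + 1 ∨ other.2 = y.2 + 1)) then
      if xIsMid then rho2 i ∘ T else rho1 i ∘ T
    else if xIsMid then swapVals i (i + 1) ∘ T
    else swapVals (i - 1) i ∘ T

/-- `ψ`-relatedness on standard key tabloids: some `ψ_i` with `1 < i < N` maps one to
the other. -/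
def psiRel (n : ℕ) (a : ℕ → ℕ) (S T : (ℕ × ℕ) →₀ ℕ) : Prop :=
  S ∈ SKDset n a ∧ T ∈ SKDset n a ∧
    ∃ i, 1 < i ∧ i < NN n a ∧ psi n a i ⇑S = ⇑T

/-- `μ` (given by parts `μ 1 ≥ ⋯ ≥ μ ℓ > 0`) is a partition with `ℓ` parts. -/
def IsPartition (ℓ : ℕ) (μ : ℕ → ℕ) : Prop :=
  (∀ i, 1 ≤ i → i ≤ ℓ → 1 ≤ μ i) ∧ (∀ i j, 1 ≤ i → i ≤ j → j ≤ ℓ → μ j ≤ μ i)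

/-- The leg of a cell of a Young diagram: the number of cells weakly above it in its
column. -/
def legY (ℓ : ℕ) (μ : ℕ → ℕ) (c : ℕ × ℕ) : ℕ :=
  ((Finset.Icc c.1 ℓ).filter (fun i => c.2 ≤ μ i)).card

/-- `comaj` of a filling of a Young diagram. -/
def comajY (ℓ : ℕ) (μ : ℕ → ℕ) (T : ℕ × ℕ → ℕ) : ℕ :=
  ∑ c ∈ (keyDiagram ℓ μ).filter (fun c => 2 ≤ c.1 ∧ T c ≤ T (c.1 - 1, c.2)), legY ℓ μ c

/-- An inversion triple of a Young diagram, encoded by the pair of cells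
`p.1 = (r, c)`, `p.2 = (r, c')` with `c < c'`; for `r > 1` the third cell is `(r-1, c)`. -/
def IsInvPair (ℓ : ℕ) (μ : ℕ → ℕ) (T : ℕ × ℕ → ℕ) (p : (ℕ × ℕ) × (ℕ × ℕ)) : Prop :=
  p.1.1 = p.2.1 ∧ p.1.2 < p.2.2 ∧
  (if p.1.1 = 1 then T p.2 < T p.1
   else cyc3 (T p.2) (T p.1) (T (p.1.1 - 1, p.1.2)))

/-- `inv` of a filling of a Young diagram. -/
def invY (ℓ : ℕ) (μ : ℕ → ℕ) (T : ℕ × ℕ → ℕ) : ℕ :=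
  (((keyDiagram ℓ μ) ×ˢ (keyDiagram ℓ μ)).filter (fun p => IsInvPair ℓ μ T p)).card

/-- Standard Young tableau: standard filling with rows increasing left to right and
columns increasing bottom to top. -/
def IsSYT (ℓ : ℕ) (μ : ℕ → ℕ) (T : ℕ × ℕ → ℕ) : Prop :=
  IsStandardFilling ℓ μ T ∧
  (∀ r c : ℕ, (r, c) ∈ keyDiagram ℓ μ → (r, c + 1) ∈ keyDiagram ℓ μ →
    T (r, c) < T (r, c + 1)) ∧
  (∀ r c : ℕ, (r, c) ∈ keyDiagram ℓ μ → (r + 1, c) ∈ keyDiagram ℓ μ →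
    T (r, c) < T (r + 1, c))

/-- Standard Young tabloids `SYD(μ)`. -/
def SYDset (ℓ : ℕ) (μ : ℕ → ℕ) : Finset ((ℕ × ℕ) →₀ ℕ) :=
  (Fillings ℓ μ (NN ℓ μ)).filter fun T => IsStandardFilling ℓ μ ⇑T ∧ invY ℓ μ ⇑T = 0

/-- The length of column `j` of the key diagram of `a`. -/
def lam (n : ℕ) (a : ℕ → ℕ) (j : ℕ) : ℕ :=
  ((Finset.Icc 1 n).filter (fun i => j ≤ a i)).card

/-- The weak composition `0^m × a`. -/
def shiftComp (m : ℕ) (a : ℕ → ℕ) : ℕ → ℕ := fun i => if i ≤ m then 0 else a (i - m)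

/-- The shift of a filling: move row `i` to row `i + m`. -/
def shiftF (n : ℕ) (a : ℕ → ℕ) (m : ℕ) (T : ℕ × ℕ → ℕ) : (ℕ × ℕ) →₀ ℕ :=
  ∑ c ∈ keyDiagram n a, Finsupp.single (c.1 + m, c.2) (T c)

end

noncomputable section ShiftLemmas

variable {n : ℕ} {a : ℕ → ℕ} {m : ℕ}

/-- The shift embedding on cells. -/
def shiftEmb (m : ℕ) : ℕ × ℕ ↪ ℕ × ℕ :=
  ⟨fun c => (c.1 + m, c.2), by intro c d h; simpa [Prod.ext_iff] using h⟩

@[simp] lemma shiftEmb_apply (c : ℕ × ℕ) : shiftEmb m c = (c.1 + m, c.2) := rfl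

/-- The inverse of shifting. -/
def unshift (m : ℕ) : ℕ × ℕ → ℕ × ℕ := fun p => (p.1 - m, p.2)

@[simp] lemma unshift_shiftEmb (c : ℕ × ℕ) : unshift m (shiftEmb m c) = c := by
  simp [unshift]

lemma shiftComp_apply_add (hi : 1 ≤ i) : shiftComp m a (i + m) = a i := by
  simp only [shiftComp]
  rw [if_neg (by omega)]
  congr 1
  omega

lemma NN_shift : NN (n + m) (shiftComp m a) = NN n a := by
  unfold NN
  have h1 : Finset.Icc 1 (n + m) = Finset.Ioc 0 (n + m) := rfl
  have h2 : Finset.Icc 1 n = Finset.Ioc 0 n := rfl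
  rw [h1, h2, ← Finset.sum_Ioc_consecutive _ (Nat.zero_le m) (by omega)]
  have hz : ∑ i ∈ Finset.Ioc 0 m, shiftComp m a i = 0 := by
    apply Finset.sum_eq_zero
    intro i hi
    simp only [Finset.mem_Ioc] at hi
    simp [shiftComp, hi.2]
  rw [hz, zero_add]
  apply Finset.sum_nbij' (fun i => i - m) (fun j => j + m)
  · intro i hi; simp only [Finset.mem_Ioc] at *; omega
  · intro j hj; simp only [Finset.mem_Ioc] at *; omega
  · intro i hi; simp only [Finset.mem_Ioc] at hi; omega
  · intro j hj; omega
  · intro i hi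
    simp only [Finset.mem_Ioc] at hi
    have heq : shiftComp m a (i - m + m) = a (i - m) := shiftComp_apply_add (by omega)
    rw [show i - m + m = i by omega] at heq
    exact heq

lemma mem_keyDiagram_iff {c : ℕ × ℕ} :
    c ∈ keyDiagram n a ↔ 1 ≤ c.1 ∧ c.1 ≤ n ∧ 1 ≤ c.2 ∧ c.2 ≤ NN n a ∧ c.2 ≤ a c.1 := by
  simp only [keyDiagram, Finset.mem_filter, Finset.mem_product, Finset.mem_Icc]
  tauto

lemma keyDiagram_shift :
    keyDiagram (n + m) (shiftComp m a) = (keyDiagram n a).map (shiftEmb m) := by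
  ext ⟨r, c⟩
  simp only [mem_keyDiagram_iff, Finset.mem_map, shiftEmb_apply, NN_shift]
  constructor
  · rintro ⟨h1, h2, h3, h4, h5⟩
    have hrm : m < r := by
      by_contra h
      simp [shiftComp, show r ≤ m by omega] at h5
      omega
    refine ⟨(r - m, c), ⟨by omega, by omega, h3, h4, ?_⟩, by simp [Prod.ext_iff]; omega⟩
    simp only
    have heq : shiftComp m a (r - m + m) = a (r - m) := shiftComp_apply_add (by omega)
    rw [show r - m + m = r by omega] at heq
    omega
  · rintro ⟨⟨i, j⟩, ⟨h1, h2, h3, h4, h5⟩, h⟩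
    obtain ⟨rfl, rfl⟩ : i + m = r ∧ j = c := by simpa [Prod.ext_iff] using h
    exact ⟨by omega, by omega, h3, h4, by rwa [shiftComp_apply_add h1]⟩

lemma shift_mem_keyDiagram_iff {c : ℕ × ℕ} (hc : 1 ≤ c.1) :
    (c.1 + m, c.2) ∈ keyDiagram (n + m) (shiftComp m a) ↔ c ∈ keyDiagram n a := by
  rw [keyDiagram_shift, Finset.mem_map]
  constructor
  · rintro ⟨d, hd, h⟩
    obtain ⟨h1, h2⟩ : d.1 + m = c.1 + m ∧ d.2 = c.2 := by simpa [Prod.ext_iff] using h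
    have : d = c := by ext <;> omega
    rwa [← this]
  · intro h; exact ⟨c, h, rfl⟩

lemma shiftF_apply (T : ℕ × ℕ → ℕ) (r c : ℕ) :
    shiftF n a m T (r, c)
      = if (r - m, c) ∈ keyDiagram n a ∧ m < r then T (r - m, c) else 0 := by
  unfold shiftF
  rw [Finsupp.finset_sum_apply]
  by_cases h : (r - m, c) ∈ keyDiagram n a ∧ m < r
  · rw [if_pos h]
    rw [Finset.sum_eq_single_of_mem (r - m, c) h.1]
    · rw [show (r - m) + m = r by omega, Finsupp.single_eq_same]
    · intro d hd hne
      rw [Finsupp.single_apply, if_neg]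
      intro hh
      apply hne
      obtain ⟨h1, h2⟩ : d.1 + m = r ∧ d.2 = c := by simpa [Prod.ext_iff] using hh
      have hd1 : 1 ≤ d.1 := (mem_keyDiagram_iff.mp hd).1
      ext <;> simp <;> omega
  · rw [if_neg h]
    apply Finset.sum_eq_zero
    intro d hd
    rw [Finsupp.single_apply, if_neg]
    intro hh
    obtain ⟨h1, h2⟩ : d.1 + m = r ∧ d.2 = c := by simpa [Prod.ext_iff] using hh
    have hd1 : 1 ≤ d.1 := (mem_keyDiagram_iff.mp hd).1
    apply h
    have : (r - m, c) = d := by ext <;> simp <;> omega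
    rw [this]
    exact ⟨hd, by omega⟩

lemma coe_shiftF {T : (ℕ × ℕ) →₀ ℕ} (h0 : ∀ c ∉ keyDiagram n a, T c = 0) :
    ⇑(shiftF n a m ⇑T) = ⇑T ∘ unshift m := by
  funext ⟨r, c⟩
  rw [Function.comp_apply, shiftF_apply]
  unfold unshift
  by_cases h : (r - m, c) ∈ keyDiagram n a ∧ m < r
  · rw [if_pos h]
  · rw [if_neg h]
    by_cases h1 : m < r
    · exact (h0 _ (fun hc => h ⟨hc, h1⟩)).symm
    · have : r - m = 0 := by omega
      rw [this]
      exact (h0 _ (fun hc => by have := (mem_keyDiagram_iff.mp hc).1; omega)).symm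

lemma shift_mem_keyDiagram_iff' {r c : ℕ} (hr : 1 ≤ r) :
    (r + m, c) ∈ keyDiagram (n + m) (shiftComp m a) ↔ (r, c) ∈ keyDiagram n a :=
  shift_mem_keyDiagram_iff (c := (r, c)) hr

lemma unshift_apply_add (T : ℕ × ℕ → ℕ) (x y : ℕ) :
    (T ∘ unshift m) (x + m, y) = T (x, y) := by
  simp [unshift]

lemma leg_shift {c : ℕ × ℕ} (hc : 1 ≤ c.1) :
    leg (shiftComp m a) (c.1 + m, c.2) = leg a c := by
  simp only [leg]
  rw [shiftComp_apply_add hc]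

lemma maj_shift (T : ℕ × ℕ → ℕ) :
    maj (n + m) (shiftComp m a) (T ∘ unshift m) = maj n a T := by
  unfold maj
  rw [keyDiagram_shift, Finset.filter_map, Finset.sum_map]
  apply Finset.sum_congr
  · apply Finset.filter_congr
    intro c hc
    simp [unshift]
  · intro c hc
    simp only [Finset.mem_filter] at hc
    exact leg_shift (mem_keyDiagram_iff.mp hc.1).1

lemma prod_map_shift (s t : Finset (ℕ × ℕ)) :
    (s.map (shiftEmb m)) ×ˢ (t.map (shiftEmb m))
      = (s ×ˢ t).map ((shiftEmb m).prodMap (shiftEmb m)) := by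
  ext ⟨⟨x1, x2⟩, ⟨y1, y2⟩⟩
  simp only [Finset.mem_product, Finset.mem_map, Function.Embedding.prodMap,
    Function.Embedding.coeFn_mk, shiftEmb_apply, Prod.ext_iff, Prod.map, Prod.exists]
  aesop

lemma isCoinvI_shift (T : ℕ × ℕ → ℕ) {r1 c1 r2 c2 : ℕ} (h1 : 1 ≤ r1) (h2 : 1 ≤ r2) :
    IsCoinvI (n + m) (shiftComp m a) (T ∘ unshift m) ((r1 + m, c1), (r2 + m, c2))
      ↔ IsCoinvI n a T ((r1, c1), (r2, c2)) := by
  unfold IsCoinvI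
  simp only [unshift_apply_add, shiftComp_apply_add h1, shiftComp_apply_add h2,
    shift_mem_keyDiagram_iff' h1, add_lt_add_iff_right]

lemma isCoinvII_shift (T : ℕ × ℕ → ℕ) {r1 c1 r2 c2 : ℕ} (h1 : 1 ≤ r1) (h2 : 1 ≤ r2) :
    IsCoinvII (n + m) (shiftComp m a) (T ∘ unshift m) ((r1 + m, c1), (r2 + m, c2))
      ↔ IsCoinvII n a T ((r1, c1), (r2, c2)) := by
  unfold IsCoinvII
  simp only [unshift_apply_add, shiftComp_apply_add h1, shiftComp_apply_add h2,
    shift_mem_keyDiagram_iff' h1, add_lt_add_iff_right]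

lemma coinv_shift (T : ℕ × ℕ → ℕ) :
    coinv (n + m) (shiftComp m a) (T ∘ unshift m) = coinv n a T := by
  unfold coinv
  rw [keyDiagram_shift, prod_map_shift, Finset.filter_map, Finset.card_map]
  congr 1
  apply Finset.filter_congr
  rintro ⟨⟨r1, c1⟩, ⟨r2, c2⟩⟩ hp
  simp only [Finset.mem_product] at hp
  have h1 : 1 ≤ r1 := (mem_keyDiagram_iff.mp hp.1).1
  have h2 : 1 ≤ r2 := (mem_keyDiagram_iff.mp hp.2).1
  have he : ((shiftEmb m).prodMap (shiftEmb m)) ((r1, c1), (r2, c2))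
      = ((r1 + m, c1), (r2 + m, c2)) := rfl
  rw [Function.comp_apply, he]
  exact or_congr (isCoinvI_shift T h1 h2) (isCoinvII_shift T h1 h2)

lemma bijOn_shift :
    Set.BijOn (fun c : ℕ × ℕ => (c.1 + m, c.2)) ↑(keyDiagram n a)
      ↑(keyDiagram (n + m) (shiftComp m a)) := by
  rw [keyDiagram_shift, Finset.coe_map]
  exact Set.InjOn.bijOn_image ((shiftEmb m).injective.injOn)

lemma bijOn_unshift :
    Set.BijOn (unshift m) ↑(keyDiagram (n + m) (shiftComp m a)) ↑(keyDiagram n a) := by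
  rw [keyDiagram_shift, Finset.coe_map]
  refine ⟨?_, ?_, ?_⟩
  · rintro x ⟨c, hc, rfl⟩
    rw [unshift_shiftEmb]
    exact hc
  · rintro x ⟨c, hc, rfl⟩ y ⟨d, hd, rfl⟩ h
    rw [unshift_shiftEmb, unshift_shiftEmb] at h
    rw [h]
  · intro c hc
    exact ⟨shiftEmb m c, Set.mem_image_of_mem _ hc, unshift_shiftEmb c⟩

lemma isStandardFilling_shift_iff (T : ℕ × ℕ → ℕ) :
    IsStandardFilling (n + m) (shiftComp m a) (T ∘ unshift m) ↔ IsStandardFilling n a T := by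
  unfold IsStandardFilling
  rw [NN_shift]
  constructor
  · intro h
    have hfun : (T ∘ unshift m) ∘ (fun c : ℕ × ℕ => (c.1 + m, c.2)) = T := by
      funext c
      simp [unshift]
    rw [← hfun]
    exact h.comp bijOn_shift
  · intro h
    exact h.comp bijOn_unshift

lemma colOf_shift (T : ℕ × ℕ → ℕ) (i : ℕ) :
    colOf (n + m) (shiftComp m a) (T ∘ unshift m) i = colOf n a T i := by
  unfold colOf
  rw [keyDiagram_shift, Finset.filter_map, Finset.sup_map]
  apply Finset.sup_congr
  · apply Finset.filter_congr
    intro c hc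
    simp [unshift]
  · intro c hc
    rfl

lemma rowOf_shift (T : ℕ × ℕ → ℕ) {i : ℕ} (h : ∃ c ∈ keyDiagram n a, T c = i) :
    rowOf (n + m) (shiftComp m a) (T ∘ unshift m) i = rowOf n a T i + m := by
  unfold rowOf
  rw [keyDiagram_shift, Finset.filter_map, Finset.sup_map]
  have hfil : (keyDiagram n a).filter ((fun d => (T ∘ unshift m) d = i) ∘ (shiftEmb m))
      = (keyDiagram n a).filter (fun d => T d = i) := by
    apply Finset.filter_congr
    intro c hc
    simp [unshift]
  rw [hfil]
  set s := (keyDiagram n a).filter (fun d => T d = i) with hs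
  have hne : s.Nonempty := by
    obtain ⟨c, hc, hci⟩ := h
    exact ⟨c, Finset.mem_filter.mpr ⟨hc, hci⟩⟩
  have hcomp : ((fun c : ℕ × ℕ => c.1) ∘ (shiftEmb m)) = fun c : ℕ × ℕ => c.1 + m := rfl
  rw [hcomp]
  apply le_antisymm
  · apply Finset.sup_le
    intro c hc
    have hb := Finset.le_sup (f := fun c : ℕ × ℕ => c.1) hc
    omega
  · obtain ⟨c, hc, hceq⟩ := Finset.exists_mem_eq_sup s hne (fun c : ℕ × ℕ => c.1)
    rw [hceq]
    exact Finset.le_sup (f := fun c : ℕ × ℕ => c.1 + m) hc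

lemma tvalAux_shift (T : ℕ × ℕ → ℕ) (hN : 1 ≤ NN n a)
    (hsurj : ∀ i, 1 ≤ i → i ≤ NN n a → ∃ c ∈ keyDiagram n a, T c = i) :
    ∀ k, k ≤ NN n a - 1 →
      tvalAux (n + m) (shiftComp m a) (T ∘ unshift m) k = tvalAux n a T k + m := by
  intro k
  induction k with
  | zero =>
    intro _
    simp only [tvalAux]
    rw [NN_shift, colOf_shift, rowOf_shift T (hsurj _ hN le_rfl)]
    split_ifs <;> push_cast <;> ring
  | succ k ih =>
    intro hk
    have hk' : k ≤ NN n a - 1 := by omega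
    simp only [tvalAux]
    rw [NN_shift, colOf_shift, colOf_shift,
      rowOf_shift T (hsurj _ (by omega) (by omega)), ih hk']
    split_ifs <;> push_cast <;> omega

lemma tval_shift (T : ℕ × ℕ → ℕ) {i : ℕ} (hi : 1 ≤ i) (hiN : i ≤ NN n a)
    (hsurj : ∀ i, 1 ≤ i → i ≤ NN n a → ∃ c ∈ keyDiagram n a, T c = i) :
    tval (n + m) (shiftComp m a) (T ∘ unshift m) i = tval n a T i + m := by
  unfold tval
  rw [NN_shift]
  exact tvalAux_shift T (le_trans hi hiN) hsurj _ (by omega)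

lemma skd_zero_off {T : (ℕ × ℕ) →₀ ℕ} (hT : T ∈ SKDset n a) :
    ∀ c ∉ keyDiagram n a, T c = 0 := by
  intro c hc
  have h1 : T ∈ Fillings n a (NN n a) := (Finset.mem_filter.mp hT).1
  simp only [Fillings, Finset.mem_finsupp_iff] at h1
  by_contra h
  exact hc (h1.1 (Finsupp.mem_support_iff.mpr h))

lemma shiftF_apply_shift (T : ℕ × ℕ → ℕ) {d : ℕ × ℕ} (hd : d ∈ keyDiagram n a) :
    shiftF n a m T (d.1 + m, d.2) = T d := by
  have hd1 : 1 ≤ d.1 := (mem_keyDiagram_iff.mp hd).1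
  have h : d.1 + m - m = d.1 := by omega
  rw [shiftF_apply, h, Prod.mk.eta, if_pos ⟨hd, by omega⟩]

lemma shift_mem_SKD {T : (ℕ × ℕ) →₀ ℕ} (hT : T ∈ SKDset n a) :
    shiftF n a m ⇑T ∈ SKDset (n + m) (shiftComp m a) := by
  have h0 := skd_zero_off hT
  obtain ⟨hF, hstd, hcv⟩ : T ∈ Fillings n a (NN n a) ∧ IsStandardFilling n a ⇑T ∧
      coinv n a ⇑T = 0 := by
    have h := Finset.mem_filter.mp hT
    exact ⟨h.1, h.2.1, h.2.2⟩
  simp only [Fillings, Finset.mem_finsupp_iff] at hF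
  rw [SKDset, Finset.mem_filter]
  refine ⟨?_, ?_, ?_⟩
  · simp only [Fillings, Finset.mem_finsupp_iff]
    constructor
    · intro c hc
      have hne := Finsupp.mem_support_iff.mp hc
      obtain ⟨r, cc⟩ := c
      rw [shiftF_apply] at hne
      by_cases hcond : (r - m, cc) ∈ keyDiagram n a ∧ m < r
      · rw [keyDiagram_shift, Finset.mem_map]
        refine ⟨(r - m, cc), hcond.1, ?_⟩
        rw [shiftEmb_apply]
        ext <;> simp <;> omega
      · rw [if_neg hcond] at hne
        exact absurd rfl hne
    · intro c hc
      rw [keyDiagram_shift, Finset.mem_map] at hc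
      obtain ⟨d, hd, rfl⟩ := hc
      rw [shiftEmb_apply, shiftF_apply_shift _ hd, NN_shift]
      exact hF.2 d hd
  · rw [coe_shiftF h0, isStandardFilling_shift_iff]
    exact hstd
  · rw [coe_shiftF h0, coinv_shift]
    exact hcv

/-- The unshift of a filling. -/
def unshiftF (n : ℕ) (a : ℕ → ℕ) (m : ℕ) (S : ℕ × ℕ → ℕ) : (ℕ × ℕ) →₀ ℕ :=
  ∑ c ∈ keyDiagram n a, Finsupp.single c (S (c.1 + m, c.2))

lemma unshiftF_apply (S : ℕ × ℕ → ℕ) (d : ℕ × ℕ) :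
    unshiftF n a m S d = if d ∈ keyDiagram n a then S (d.1 + m, d.2) else 0 := by
  unfold unshiftF
  rw [Finsupp.finset_sum_apply]
  by_cases h : d ∈ keyDiagram n a
  · rw [if_pos h, Finset.sum_eq_single_of_mem d h]
    · rw [Finsupp.single_eq_same]
    · intro b hb hne
      rw [Finsupp.single_apply, if_neg hne]
  · rw [if_neg h]
    apply Finset.sum_eq_zero
    intro b hb
    rw [Finsupp.single_apply, if_neg]
    rintro rfl
    exact h hb

lemma shiftF_unshiftF {S : (ℕ × ℕ) →₀ ℕ}
    (hS0 : ∀ c ∉ keyDiagram (n + m) (shiftComp m a), S c = 0) :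
    shiftF n a m ⇑(unshiftF n a m ⇑S) = S := by
  ext ⟨r, c⟩
  rw [shiftF_apply]
  by_cases h : (r - m, c) ∈ keyDiagram n a ∧ m < r
  · rw [if_pos h, unshiftF_apply, if_pos h.1]
    congr 1
    ext <;> simp <;> omega
  · rw [if_neg h]
    symm
    apply hS0
    intro hc
    rw [keyDiagram_shift, Finset.mem_map] at hc
    obtain ⟨d, hd, hde⟩ := hc
    have hd1 : 1 ≤ d.1 := (mem_keyDiagram_iff.mp hd).1
    obtain ⟨h1, h2⟩ : d.1 + m = r ∧ d.2 = c := by simpa [Prod.ext_iff] using hde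
    refine h ⟨?_, by omega⟩
    have : (r - m, c) = d := by ext <;> simp <;> omega
    rw [this]
    exact hd

lemma unshift_mem_SKD {S : (ℕ × ℕ) →₀ ℕ} (hS : S ∈ SKDset (n + m) (shiftComp m a)) :
    unshiftF n a m ⇑S ∈ SKDset n a := by
  have hS0 := skd_zero_off hS
  set T := unshiftF n a m ⇑S with hTdef
  have hT0 : ∀ c ∉ keyDiagram n a, T c = 0 := by
    intro c hc
    rw [hTdef, unshiftF_apply, if_neg hc]
  have key : ⇑S = ⇑T ∘ unshift m := by
    rw [← coe_shiftF hT0, shiftF_unshiftF hS0]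
  obtain ⟨hF, hstd, hcv⟩ : S ∈ Fillings (n + m) (shiftComp m a) (NN (n + m) (shiftComp m a)) ∧
      IsStandardFilling (n + m) (shiftComp m a) ⇑S ∧ coinv (n + m) (shiftComp m a) ⇑S = 0 := by
    have h := Finset.mem_filter.mp hS
    exact ⟨h.1, h.2.1, h.2.2⟩
  simp only [Fillings, Finset.mem_finsupp_iff] at hF
  rw [SKDset, Finset.mem_filter]
  refine ⟨?_, ?_, ?_⟩
  · simp only [Fillings, Finset.mem_finsupp_iff]
    constructor
    · intro c hc
      have hne := Finsupp.mem_support_iff.mp hc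
      by_contra hcd
      exact hne (hT0 c hcd)
    · intro c hc
      have hc1 : 1 ≤ c.1 := (mem_keyDiagram_iff.mp hc).1
      rw [hTdef, unshiftF_apply, if_pos hc]
      have hmem : (c.1 + m, c.2) ∈ keyDiagram (n + m) (shiftComp m a) :=
        (shift_mem_keyDiagram_iff hc1).mpr hc
      have := hF.2 _ hmem
      rwa [NN_shift] at this
  · rw [key] at hstd
    exact (isStandardFilling_shift_iff ⇑T).mp hstd
  · rw [key, coinv_shift] at hcv
    exact hcv

end ShiftLemmas

end NSMac
/-- the shift map is a bijection `SKD(a) → SKD(0^m × a)` preserving `maj`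
and shifting weak descent compositions by `m` zero parts. -/
theorem NSMac.shift_stability (n : ℕ) (a : ℕ → ℕ) (m : ℕ) (hm : 1 ≤ m) :
    Set.BijOn (fun T : (ℕ × ℕ) →₀ ℕ => shiftF n a m ⇑T)
      ↑(SKDset n a) ↑(SKDset (n + m) (shiftComp m a)) ∧
    ∀ T ∈ SKDset n a,
      maj (n + m) (shiftComp m a) ⇑(shiftF n a m ⇑T) = maj n a ⇑T ∧
      ∀ ds, desOpt n a ⇑T = some ds →
        desOpt (n + m) (shiftComp m a) ⇑(shiftF n a m ⇑T)
          = some (fun r => if r ≤ m then 0 else ds (r - m)) := by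
  constructor
  · refine ⟨?_, ?_, ?_⟩
    · intro T hT
      exact Finset.mem_coe.mpr (shift_mem_SKD (Finset.mem_coe.mp hT))
    · intro T₁ h₁ T₂ h₂ h
      have h01 := skd_zero_off (Finset.mem_coe.mp h₁)
      have h02 := skd_zero_off (Finset.mem_coe.mp h₂)
      simp only at h
      ext c
      by_cases hc : c ∈ keyDiagram n a
      · have hv : shiftF n a m ⇑T₁ (c.1 + m, c.2) = shiftF n a m ⇑T₂ (c.1 + m, c.2) := by
          rw [h]
        rwa [shiftF_apply_shift _ hc, shiftF_apply_shift _ hc] at hv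
      · rw [h01 c hc, h02 c hc]
    · intro S hS
      have hSm := Finset.mem_coe.mp hS
      refine ⟨unshiftF n a m ⇑S, Finset.mem_coe.mpr (unshift_mem_SKD hSm), ?_⟩
      exact shiftF_unshiftF (skd_zero_off hSm)
  · intro T hT
    have h0 := skd_zero_off hT
    obtain ⟨hF, hstd, hcv⟩ : T ∈ Fillings n a (NN n a) ∧ IsStandardFilling n a ⇑T ∧
        coinv n a ⇑T = 0 := by
      have h := Finset.mem_filter.mp hT
      exact ⟨h.1, h.2.1, h.2.2⟩
    refine ⟨?_, ?_⟩
    · rw [coe_shiftF h0, maj_shift]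
    · intro ds hds
      have hsurj : ∀ i, 1 ≤ i → i ≤ NN n a → ∃ c ∈ keyDiagram n a, ⇑T c = i := by
        intro i h1 h2
        obtain ⟨c, hc, hci⟩ := hstd.2.2 (Set.mem_Icc.mpr ⟨h1, h2⟩)
        exact ⟨c, Finset.mem_coe.mp hc, hci⟩
      have hcond : ∀ i ∈ Finset.Icc 1 (NN n a), 1 ≤ tval n a ⇑T i := by
        by_contra hc
        rw [desOpt, if_neg hc] at hds
        cases hds
      have hds' : ds = fun r : ℕ =>
          ((Finset.Icc 1 (NN n a)).filter (fun i => tval n a ⇑T i = (r : ℤ))).card := by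
        rw [desOpt, if_pos hcond] at hds
        exact (Option.some.inj hds).symm
      rw [coe_shiftF h0, desOpt, NN_shift, if_pos ?hpos]
      case hpos =>
        intro i hi
        have hm1 := Finset.mem_Icc.mp hi
        rw [tval_shift ⇑T hm1.1 hm1.2 hsurj]
        have := hcond i hi
        omega
      congr 1
      funext r
      rw [hds']
      by_cases hr : r ≤ m
      · rw [if_pos hr]
        apply Finset.card_eq_zero.mpr
        rw [Finset.filter_eq_empty_iff]
        intro i hi
        have hm1 := Finset.mem_Icc.mp hi
        rw [tval_shift ⇑T hm1.1 hm1.2 hsurj]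
        have := hcond i hi
        omega
      · rw [if_neg hr]
        congr 1
        apply Finset.filter_congr
        intro i hi
        have hm1 := Finset.mem_Icc.mp hi
        rw [tval_shift ⇑T hm1.1 hm1.2 hsurj]
        omega
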